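/- arXiv:2507.16232 — 9 statements merged into one kernel-verified Lean document; each statement's English description precedes it below -/
import Mathlib

section
/- If the enveloping semigroup E(X) of a flow (X,T) consists entirely of homeomorphisms of X (i.e., is a group of homeomorphisms), then the enveloping semigroup E(E(X)) of the induced flow (E(X),T) also consists of homeomorphisms. -/
open Filter Set Topology Uniformity

/-- The enveloping semigroup of the flow: the pointwise closure of the translation
maps `x ↦ t • x` inside `X → X` (with the product topology). -/
def envSemigroup (T X : Type*) [SMul T X] [TopologicalSpace X] : Set (X → X) :=
  closure (Set.range fun t : T => fun x : X => t • x)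

section EnvAction

variable (T X : Type*) [Monoid T] [TopologicalSpace X] [MulAction T X]
  [ContinuousConstSMul T X]

lemma smul_mem_envSemigroup (t : T) {p : X → X} (hp : p ∈ envSemigroup T X) :
    t • p ∈ envSemigroup T X := by
  have hc : Continuous fun q : X → X => t • q :=
    continuous_pi fun x => (continuous_const_smul t).comp (continuous_apply x)
  refine map_mem_closure hc hp ?_
  rintro _ ⟨s, rfl⟩
  exact ⟨t * s, by funext x; simp [mul_smul]⟩

/-- `T` acts on the enveloping semigroup by left composition `t • p = π^t ∘ p`. -/
instance : MulAction T (envSemigroup T X) where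
  smul t p := ⟨t • (p : X → X), smul_mem_envSemigroup T X t p.2⟩
  one_smul p := Subtype.ext (one_smul T (p : X → X))
  mul_smul a b p := Subtype.ext (mul_smul a b (p : X → X))

instance : ContinuousConstSMul T (envSemigroup T X) := by
  refine ⟨fun t => continuous_induced_rng.2 ?_⟩
  have h : (fun p : envSemigroup T X => ((t • p : envSemigroup T X) : X → X))
      = fun p : envSemigroup T X => t • (p : X → X) := rfl
  show Continuous fun p : envSemigroup T X => ((t • p : envSemigroup T X) : X → X)
  rw [h]
  exact continuous_pi fun x => (continuous_const_smul t).comp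
    ((continuous_apply x).comp continuous_subtype_val)

end EnvAction

set_option linter.unusedSectionVars false

section Aux

variable {T X : Type*} [Monoid T] [TopologicalSpace X] [MulAction T X]
  [ContinuousConstSMul T X]

lemma id_mem_envSemigroup : (id : X → X) ∈ envSemigroup T X :=
  subset_closure ⟨1, by funext x; simp⟩

lemma isClosed_envSemigroup : IsClosed (envSemigroup T X) := isClosed_closure

lemma comp_mem_envSemigroup {p q : X → X} (hp : p ∈ envSemigroup T X)
    (hq : q ∈ envSemigroup T X) : q ∘ p ∈ envSemigroup T X := by
  have hc : Continuous fun f : X → X => f ∘ p :=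
    continuous_pi fun x => continuous_apply (p x)
  have : envSemigroup T X ⊆ (fun f : X → X => f ∘ p) ⁻¹' envSemigroup T X := by
    refine closure_minimal ?_ (isClosed_envSemigroup.preimage hc)
    rintro _ ⟨t, rfl⟩
    have : (fun x : X => t • x) ∘ p = t • p := by funext x; rfl
    simpa [this] using smul_mem_envSemigroup T X t hp
  exact this hq

end Aux

section Inv

variable {T X : Type*} [Monoid T] [TopologicalSpace X] [CompactSpace X] [T2Space X]
  [MulAction T X] [ContinuousConstSMul T X]

lemma inv_mem_envSemigroup (h : ∀ p ∈ envSemigroup T X, IsHomeomorph p)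
    {p : X → X} (hp : p ∈ envSemigroup T X) :
    ∃ g ∈ envSemigroup T X, p ∘ g = id ∧ g ∘ p = id := by
  obtain ⟨e, hep⟩ := isHomeomorph_iff_exists_homeomorph.mp (h p hp)
  -- all iterates of `p` belong to the enveloping semigroup
  have hps : ∀ n, p^[n] ∈ envSemigroup T X := by
    intro n
    induction n with
    | zero => exact id_mem_envSemigroup
    | succ n ih =>
      rw [Function.iterate_succ']
      exact comp_mem_envSemigroup ih hp
  set P : Set (X → X) := {f | ∃ n : ℕ, f = p^[n + 1]} with hP
  set S : Set (X → X) := closure P with hS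
  have hSE : S ⊆ envSemigroup T X :=
    closure_minimal (by rintro f ⟨n, rfl⟩; exact hps (n + 1)) isClosed_envSemigroup
  -- `S` is a compact subsemigroup
  have stepA : ∀ a ∈ S, ∀ n : ℕ, a ∘ p^[n + 1] ∈ S := by
    intro a ha n
    have hc : Continuous fun f : X → X => f ∘ p^[n + 1] :=
      continuous_pi fun x => continuous_apply _
    have := map_mem_closure (f := fun f : X → X => f ∘ p^[n + 1]) hc ha (t := P) ?_
    · exact this
    · rintro f ⟨m, rfl⟩
      refine ⟨m + n + 1, ?_⟩
      rw [show m + n + 1 + 1 = m + 1 + (n + 1) by ring]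
      exact (Function.iterate_add p (m + 1) (n + 1)).symm
  have hScomp : ∀ a ∈ S, ∀ b ∈ S, a ∘ b ∈ S := by
    intro a ha b hb
    have hacont : Continuous a := (h a (hSE ha)).continuous
    have hc : Continuous fun f : X → X => a ∘ f :=
      continuous_pi fun x => hacont.comp (continuous_apply x)
    have hScl : closure S = S := isClosed_closure.closure_eq
    have := map_mem_closure (f := fun f : X → X => a ∘ f) hc hb (t := S) ?_
    · rw [hScl] at this; exact this
    · rintro f ⟨n, rfl⟩
      exact stepA a ha n
  have hPne : S.Nonempty := ⟨p, subset_closure ⟨0, by simp⟩⟩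
  have hScpt : IsCompact S := isClosed_closure.isCompact
  -- idempotent in `S` via Ellis–Numakura
  letI : TopologicalSpace (Function.End X) := inferInstanceAs (TopologicalSpace (X → X))
  haveI : T2Space (Function.End X) := inferInstanceAs (T2Space (X → X))
  obtain ⟨e₀, he₀S, he₀⟩ :=
    exists_idempotent_in_compact_subsemigroup (M := Function.End X)
      (fun r => continuous_pi fun x => continuous_apply _) S hPne hScpt hScomp
  have he₀id : e₀ = (id : X → X) := by
    funext x
    exact (h e₀ (hSE he₀S)).bijective.injective (congrFun he₀ x)
  have hidS : (id : X → X) ∈ S := he₀id ▸ he₀S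
  -- the inverse of `p` lies in `E(X)`
  have hg : (⇑e.symm : X → X) ∈ envSemigroup T X := by
    have hc : Continuous fun f : X → X => ⇑e.symm ∘ f :=
      continuous_pi fun x => e.symm.continuous.comp (continuous_apply x)
    have := map_mem_closure hc hidS (t := envSemigroup T X) ?_
    · simpa [isClosed_envSemigroup.closure_eq] using this
    · rintro f ⟨n, rfl⟩
      have : (⇑e.symm : X → X) ∘ p^[n + 1] = p^[n] := by
        rw [Function.iterate_succ', ← Function.comp_assoc, ← hep, e.symm_comp_self,
          Function.id_comp]
      show ⇑e.symm ∘ p^[n + 1] ∈ envSemigroup T X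
      rw [this]
      exact hps n
  exact ⟨⇑e.symm, hg, by rw [← hep]; exact e.self_comp_symm,
    by rw [← hep]; exact e.symm_comp_self⟩

end Inv

/-- If the enveloping semigroup `E(X)` consists entirely of homeomorphisms of `X`,
then the enveloping semigroup `E(E(X))` of the induced flow `(E(X), T)` also
consists entirely of homeomorphisms. -/
theorem env_env_homeomorphisms {T X : Type*} [Group T] [TopologicalSpace T]
    [IsTopologicalGroup T] [UniformSpace X] [CompactSpace X] [T2Space X]
    [MulAction T X] [ContinuousSMul T X]
    (h : ∀ p ∈ envSemigroup T X, IsHomeomorph p) :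
    ∀ q ∈ envSemigroup T (envSemigroup T X),
      IsHomeomorph (q : (envSemigroup T X) → (envSemigroup T X)) := by
  intro q hq
  haveI : CompactSpace (envSemigroup T X) :=
    isCompact_iff_compactSpace.mp
      (isClosed_envSemigroup (T := T) (X := X)).isCompact
  set idE : envSemigroup T X := ⟨id, id_mem_envSemigroup⟩ with hidE
  set r : envSemigroup T X := q idE with hr
  -- every element of `E(E(X))` is left composition by its value at the identity
  have hkey : ∀ p : envSemigroup T X, (q p : X → X) = (r : X → X) ∘ (p : X → X) := by
    intro p
    have hcl : IsClosed {f : envSemigroup T X → envSemigroup T X |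
        ((f p : X → X)) = ((f idE : X → X)) ∘ (p : X → X)} := by
      apply isClosed_eq
      · exact continuous_subtype_val.comp (continuous_apply p)
      · exact continuous_pi fun x => (continuous_apply ((p : X → X) x)).comp
          (continuous_subtype_val.comp (continuous_apply idE))
    have hsub : envSemigroup T (envSemigroup T X) ⊆ {f : envSemigroup T X → envSemigroup T X |
        ((f p : X → X)) = ((f idE : X → X)) ∘ (p : X → X)} := by
      refine closure_minimal ?_ hcl
      rintro _ ⟨t, rfl⟩
      show ((t • p : envSemigroup T X) : X → X)
        = ((t • idE : envSemigroup T X) : X → X) ∘ (p : X → X)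
      funext x
      rfl
    exact hsub hq
  have hrH : IsHomeomorph (r : X → X) := h (r : X → X) r.2
  obtain ⟨g, hgE, hpg, hgp⟩ := inv_mem_envSemigroup h r.2
  -- continuity of `q`
  have hqc : Continuous q := by
    refine continuous_induced_rng.2 ?_
    show Continuous fun p : envSemigroup T X => (q p : X → X)
    have : (fun p : envSemigroup T X => (q p : X → X))
        = fun p : envSemigroup T X => (r : X → X) ∘ (p : X → X) := funext fun p => hkey p
    rw [this]
    exact continuous_pi fun x =>
      hrH.continuous.comp ((continuous_apply x).comp continuous_subtype_val)
  -- bijectivity of `q`, with explicit inverse given by composition with `g`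
  let G : envSemigroup T X → envSemigroup T X :=
    fun s => ⟨g ∘ (s : X → X), comp_mem_envSemigroup s.2 hgE⟩
  have hleft : Function.LeftInverse G q := by
    intro p
    refine Subtype.ext ?_
    show g ∘ (q p : X → X) = (p : X → X)
    rw [hkey p, ← Function.comp_assoc, hgp, Function.id_comp]
  have hright : Function.RightInverse G q := by
    intro s
    refine Subtype.ext ?_
    show (q (G s) : X → X) = (s : X → X)
    rw [hkey (G s)]
    show (r : X → X) ∘ (g ∘ (s : X → X)) = (s : X → X)
    rw [← Function.comp_assoc, hpg, Function.id_comp]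
  exact isHomeomorph_iff_continuous_bijective.mpr
    ⟨hqc, Function.bijective_iff_has_inverse.mpr ⟨G, hleft, hright⟩⟩
end

section
/- If a flow (X,T) is equicontinuous, then the induced flow (E(X),T) on its enveloping semigroup is equicontinuous; conversely, if (X,T) is point transitive and (E(X),T) is equicontinuous, then (X,T) is equicontinuous. -/
open Filter Set Topology Uniformity

/-- A flow `(X, T)` is equicontinuous: for every entourage `V` there is an
entourage `U` such that `U`-close points stay `V`-close under all translations. -/
def Equicont (T X : Type*) [SMul T X] [UniformSpace X] : Prop :=
  ∀ V ∈ 𝓤 X, ∃ U ∈ 𝓤 X, ∀ x y : X, (x, y) ∈ U → ∀ t : T, (t • x, t • y) ∈ V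

/-- Equicontinuity of the subflow on an invariant subset `A` (with the relative
uniformity). -/
def EquicontOn (T : Type*) {X : Type*} [SMul T X] [UniformSpace X] (A : Set X) : Prop :=
  ∀ V ∈ 𝓤 X, ∃ U ∈ 𝓤 X, ∀ x ∈ A, ∀ y ∈ A, (x, y) ∈ U → ∀ t : T, (t • x, t • y) ∈ V

/-- coordinate entourages of the product uniformity -/
lemma eval_entourage {X : Type*} [UniformSpace X] (x : X) {W : Set (X × X)} (hW : W ∈ 𝓤 X) :
    {pq : (X → X) × (X → X) | (pq.1 x, pq.2 x) ∈ W} ∈ 𝓤 (X → X) := by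
  rw [Pi.uniformity]
  exact mem_iInf_of_mem x (preimage_mem_comap hW)

/-- If `(X, T)` is equicontinuous then the induced flow `(E(X), T)` (with `E(X) ⊆ X → X`
carrying the pointwise uniformity, `T` acting by left composition) is equicontinuous;
conversely, if `(X, T)` is point transitive and `(E(X), T)` is equicontinuous,
then `(X, T)` is equicontinuous. -/
theorem equicont_env_of_equicont {T X : Type*} [Group T] [TopologicalSpace T]
    [IsTopologicalGroup T] [UniformSpace X] [CompactSpace X] [T2Space X]
    [MulAction T X] [ContinuousSMul T X] :
    (Equicont T X → EquicontOn T (envSemigroup T X)) ∧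
      ((∃ x₀ : X, Dense (Set.range fun t : T => t • x₀)) →
        EquicontOn T (envSemigroup T X) → Equicont T X) := by
  constructor
  · -- forward direction
    intro hX V hV
    rw [Pi.uniformity, Filter.mem_iInf] at hV
    obtain ⟨I, hIfin, Vs, hVs, rfl⟩ := hV
    haveI := hIfin.to_subtype
    choose W hWmem hWsub using fun i : I => mem_comap.mp (hVs i)
    choose U hUmem hUimp using fun i : I => hX (W i) (hWmem i)
    refine ⟨⋂ i : I, {pq : (X → X) × (X → X) | (pq.1 i, pq.2 i) ∈ U i}, ?_, ?_⟩
    · exact (Filter.iInter_mem).mpr fun i => eval_entourage (i : X) (hUmem i)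
    · intro p _ q _ hpq t
      refine mem_iInter.mpr fun i => hWsub i ?_
      have h1 : (p (i : X), q (i : X)) ∈ U i := mem_iInter.mp hpq i
      have h2 := hUimp i _ _ h1 t
      simpa [Pi.smul_apply] using h2
  · -- reverse direction
    rintro ⟨x₀, hd⟩ hE V hV
    obtain ⟨V₁, hV₁, hV₁c⟩ := comp_mem_uniformity_sets hV
    obtain ⟨U, hUmem, hUimp⟩ := hE _ (eval_entourage x₀ hV₁)
    obtain ⟨U₀, hU₀mem, hU₀open, hU₀sub⟩ :
        ∃ U₀ ∈ 𝓤 (X → X), IsOpen U₀ ∧ U₀ ⊆ U := by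
      obtain ⟨U₀, ⟨h1, h2⟩, h3⟩ := uniformity_hasBasis_open.mem_iff.mp hUmem
      exact ⟨U₀, h1, h2, h3⟩
    set E := envSemigroup T X with hEdef
    set Ω : Set ((X → X) × (X → X)) :=
      ⋃ (a ∈ E) (b ∈ E) (_ : a x₀ = b x₀),
        {p : X → X | (p, a) ∈ U₀} ×ˢ {q : X → X | (b, q) ∈ U₀} with hΩdef
    have hΩopen : IsOpen Ω := by
      refine isOpen_iUnion fun a => isOpen_iUnion fun _ => isOpen_iUnion fun b =>
        isOpen_iUnion fun _ => isOpen_iUnion fun _ => IsOpen.prod ?_ ?_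
      · exact hU₀open.preimage (continuous_id.prodMk continuous_const)
      · exact hU₀open.preimage (continuous_const.prodMk continuous_id)
    have hRsub : ∀ p ∈ E, ∀ q ∈ E, p x₀ = q x₀ → (p, q) ∈ Ω := by
      intro p hp q hq h
      refine mem_iUnion.mpr ⟨p, mem_iUnion.mpr ⟨hp, mem_iUnion.mpr ⟨q,
        mem_iUnion.mpr ⟨hq, mem_iUnion.mpr ⟨h, ?_⟩⟩⟩⟩⟩
      exact ⟨refl_mem_uniformity hU₀mem, refl_mem_uniformity hU₀mem⟩
    have hΩgood : ∀ p ∈ E, ∀ q ∈ E, (p, q) ∈ Ω → ∀ t : T,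
        (t • p x₀, t • q x₀) ∈ V := by
      intro p hp q hq hmem t
      obtain ⟨a, ha⟩ := mem_iUnion.mp hmem
      obtain ⟨haE, ha⟩ := mem_iUnion.mp ha
      obtain ⟨b, hb⟩ := mem_iUnion.mp ha
      obtain ⟨hbE, hb⟩ := mem_iUnion.mp hb
      obtain ⟨hab, hpa, hbq⟩ := mem_iUnion.mp hb
      have h1 := hUimp p hp a haE (hU₀sub hpa) t
      have h2 := hUimp b hbE q hq (hU₀sub hbq) t
      simp only [mem_setOf_eq, Pi.smul_apply] at h1 h2
      rw [hab] at h1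
      exact hV₁c ⟨t • b x₀, h1, h2⟩
    -- compactness
    have hEcomp : IsCompact E := isClosed_closure.isCompact
    have hK : IsCompact ((E ×ˢ E) \ Ω) := (hEcomp.prod hEcomp).diff hΩopen
    have hC : IsCompact ((fun pq : (X → X) × (X → X) => (pq.1 x₀, pq.2 x₀)) ''
        ((E ×ˢ E) \ Ω)) :=
      hK.image (((continuous_apply x₀).comp continuous_fst).prodMk
        ((continuous_apply x₀).comp continuous_snd))
    set C := (fun pq : (X → X) × (X → X) => (pq.1 x₀, pq.2 x₀)) '' ((E ×ˢ E) \ Ω) with hCdef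
    -- surjectivity of evaluation
    have hsurj : ∀ x : X, ∃ p ∈ E, p x₀ = x := by
      have himg : IsClosed ((fun p : X → X => p x₀) '' E) :=
        (hEcomp.image (continuous_apply x₀)).isClosed
      have hsub : (Set.range fun t : T => t • x₀) ⊆ (fun p : X → X => p x₀) '' E := by
        rintro _ ⟨t, rfl⟩
        exact ⟨_, subset_closure ⟨t, rfl⟩, rfl⟩
      have hall : (Set.univ : Set X) ⊆ (fun p : X → X => p x₀) '' E := by
        rw [← hd.closure_eq]
        calc closure (Set.range fun t : T => t • x₀)
            ⊆ closure ((fun p : X → X => p x₀) '' E) := closure_mono hsub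
          _ = _ := himg.closure_eq
      intro x
      obtain ⟨p, hp, he⟩ := hall (mem_univ x)
      exact ⟨p, hp, he⟩
    refine ⟨Cᶜ, ?_, ?_⟩
    · rw [← nhdsSet_diagonal_eq_uniformity]
      refine (hC.isClosed.isOpen_compl.mem_nhdsSet).mpr ?_
      rintro ⟨x, y⟩ hdiag hmem
      obtain ⟨⟨p, q⟩, ⟨⟨hpE, hqE⟩, hnΩ⟩, heq⟩ := hmem
      have hx : p x₀ = x := congrArg Prod.fst heq
      have hy : q x₀ = y := congrArg Prod.snd heq
      have : p x₀ = q x₀ := by rw [hx, hy]; exact hdiag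
      exact hnΩ (hRsub p hpE q hqE this)
    · intro x y hxy t
      obtain ⟨p, hpE, hpx⟩ := hsurj x
      obtain ⟨q, hqE, hqy⟩ := hsurj y
      have hΩmem : (p, q) ∈ Ω := by
        by_contra hn
        exact hxy ⟨(p, q), ⟨⟨hpE, hqE⟩, hn⟩, by show (p x₀, q x₀) = (x, y); rw [hpx, hqy]⟩
      have := hΩgood p hpE q hqE hΩmem t
      rwa [hpx, hqy] at this
end

section
/- For any flow (X,T), the flow (E(X),T) is isomorphic (conjugate via a T-equivariant homeomorphism) to the flow (E(E(X)),T). -/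
open Filter Set Topology Uniformity

section Aux

variable {T X : Type*} [Monoid T] [TopologicalSpace X] [MulAction T X]
  [ContinuousConstSMul T X]

lemma envSemigroup_comp_mem {p q : X → X} (hp : p ∈ envSemigroup T X)
    (hq : q ∈ envSemigroup T X) : p ∘ q ∈ envSemigroup T X := by
  have hc : Continuous fun r : X → X => r ∘ q :=
    continuous_pi fun x => continuous_apply (q x)
  have h : (fun r : X → X => r ∘ q) p ∈ closure (envSemigroup T X) := by
    refine map_mem_closure (f := fun r : X → X => r ∘ q) hc hp ?_
    rintro _ ⟨t, rfl⟩
    show (fun x : X => t • x) ∘ q ∈ envSemigroup T X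
    have he : (fun x : X => t • x) ∘ q = t • q := rfl
    rw [he]
    exact smul_mem_envSemigroup T X t hq
  exact IsClosed.closure_subset isClosed_closure h

/-- The natural map `E(X) → (E(X) → E(X))`, `p ↦ (q ↦ p ∘ q)`. -/
def envComp (p : envSemigroup T X) : envSemigroup T X → envSemigroup T X :=
  fun q => ⟨(p : X → X) ∘ (q : X → X), envSemigroup_comp_mem p.2 q.2⟩

lemma continuous_envComp : Continuous (envComp (T := T) (X := X)) :=
  continuous_pi fun q => continuous_induced_rng.2 <|
    continuous_pi fun x => (continuous_apply ((q : X → X) x)).comp continuous_subtype_val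

lemma envComp_smul_elem (t : T) :
    envComp (⟨fun x : X => t • x, subset_closure ⟨t, rfl⟩⟩ : envSemigroup T X)
      = fun q : envSemigroup T X => t • q := by
  funext q
  exact Subtype.ext rfl

lemma isInducing_envVal :
    IsInducing (fun (f : envSemigroup T X → envSemigroup T X)
      (q : envSemigroup T X) => ((f q : X → X))) := by
  constructor
  simp_rw [Pi.topologicalSpace, instTopologicalSpaceSubtype, induced_iInf,
    induced_compose, Function.comp_def]
  simp_rw [Pi.topologicalSpace, induced_iInf, induced_compose, Function.comp_def]

lemma envComp_mem (p : envSemigroup T X) :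
    envComp p ∈ envSemigroup T (envSemigroup T X) := by
  set ι := fun (f : envSemigroup T X → envSemigroup T X)
      (q : envSemigroup T X) => ((f q : X → X)) with hι
  have hind : IsInducing ι := isInducing_envVal
  show envComp p ∈ closure (Set.range fun t : T =>
    fun q : envSemigroup T X => t • q)
  rw [hind.closure_eq_preimage_closure_image, mem_preimage]
  have hc : Continuous fun r : X → X => fun q : envSemigroup T X => r ∘ (q : X → X) :=
    continuous_pi fun q => continuous_pi fun x => continuous_apply ((q : X → X) x)
  have : ι (envComp p) = fun q : envSemigroup T X => (p : X → X) ∘ (q : X → X) := rfl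
  rw [this]
  refine map_mem_closure hc p.2 ?_
  rintro _ ⟨t, rfl⟩
  refine ⟨fun q : envSemigroup T X => t • q, ⟨t, rfl⟩, ?_⟩
  rfl

end Aux

/-- For any flow `(X, T)`, the induced flow `(E(X), T)` is isomorphic to the flow
`(E(E(X)), T)`: there is a `T`-equivariant homeomorphism between them. -/
theorem env_iso_env_env {T X : Type*} [Group T] [TopologicalSpace T]
    [IsTopologicalGroup T] [UniformSpace X] [CompactSpace X] [T2Space X]
    [MulAction T X] [ContinuousSMul T X] :
    ∃ φ : (envSemigroup T X) ≃ₜ (envSemigroup T (envSemigroup T X)),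
      ∀ (t : T) (p : envSemigroup T X), φ (t • p) = t • φ p := by
  haveI : CompactSpace (envSemigroup T X) :=
    isCompact_iff_compactSpace.mp (isClosed_closure.isCompact)
  set Ψ : envSemigroup T X → envSemigroup T (envSemigroup T X) :=
    fun p => ⟨envComp p, envComp_mem p⟩ with hΨ
  have hΨc : Continuous Ψ :=
    continuous_induced_rng.2 continuous_envComp
  -- injectivity
  have hinj : Function.Injective Ψ := by
    intro p p' h
    have h2 : envComp p ⟨fun x : X => (1 : T) • x, subset_closure ⟨1, rfl⟩⟩
        = envComp p' ⟨fun x : X => (1 : T) • x, subset_closure ⟨1, rfl⟩⟩ :=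
      congrFun (congrArg Subtype.val h) _
    refine Subtype.ext ?_
    have h3 := congrArg Subtype.val h2
    funext x
    have hx := congrFun h3 x
    simpa [envComp, one_smul] using hx
  -- surjectivity
  have hsurj : Function.Surjective Ψ := by
    intro f
    have hKcomp : IsCompact (Set.range Ψ) := (isCompact_range hΨc)
    have hKclosed : IsClosed (Set.range Ψ) := hKcomp.isClosed
    have hsub : (Set.range fun t : T => fun q : envSemigroup T X => t • q) ⊆
        Subtype.val '' (Set.range Ψ) := by
      rintro _ ⟨t, rfl⟩
      refine ⟨Ψ ⟨fun x : X => t • x, subset_closure ⟨t, rfl⟩⟩, ⟨_, rfl⟩, ?_⟩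
      exact envComp_smul_elem t
    have hval : IsClosed (Subtype.val '' (Set.range Ψ)) := by
      have : IsCompact (Subtype.val '' (Set.range Ψ)) :=
        hKcomp.image continuous_subtype_val
      exact this.isClosed
    have hmem : (f : envSemigroup T X → envSemigroup T X) ∈
        Subtype.val '' (Set.range Ψ) :=
      (hval.closure_subset_iff.mpr hsub) f.2
    obtain ⟨g, ⟨p, rfl⟩, hg⟩ := hmem
    exact ⟨p, Subtype.ext hg⟩
  let e : envSemigroup T X ≃ envSemigroup T (envSemigroup T X) :=
    Equiv.ofBijective Ψ ⟨hinj, hsurj⟩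
  refine ⟨Continuous.homeoOfEquivCompactToT2 (f := e) hΨc, ?_⟩
  intro t p
  show Ψ (t • p) = t • Ψ p
  refine Subtype.ext ?_
  funext q
  refine Subtype.ext ?_
  funext x
  rfl
end

section
/- Let φ: (X,T) → (Y,T) be a factor map between flows on compact Hausdorff spaces such that φ is feeble open (the image of every nonempty open set has nonempty interior). If (Y,T) is sensitive, then (X,T) is sensitive. -/
open Filter Set Topology Uniformity

/-- A flow is sensitive: there is an entourage `V` such that arbitrarily close to
any point there is a point separated from it by `V` under some translation. -/
def Sensitive (T X : Type*) [SMul T X] [UniformSpace X] : Prop :=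
  ∃ V ∈ 𝓤 X, ∀ x : X, ∀ U ∈ 𝓤 X, ∃ y : X, (x, y) ∈ U ∧ ∃ t : T, (t • x, t • y) ∉ V

/-- Let `φ : (X, T) → (Y, T)` be a factor map (continuous, surjective, equivariant)
of flows on compact Hausdorff spaces which is feeble open (the image of every
nonempty open set has nonempty interior). If `(Y, T)` is sensitive, then `(X, T)`
is sensitive. -/
theorem sensitive_of_feebleOpen_factor {T X Y : Type*} [Group T] [TopologicalSpace T]
    [IsTopologicalGroup T]
    [UniformSpace X] [CompactSpace X] [T2Space X] [MulAction T X] [ContinuousSMul T X]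
    [UniformSpace Y] [CompactSpace Y] [T2Space Y] [MulAction T Y] [ContinuousSMul T Y]
    (φ : X → Y) (hcont : Continuous φ) (hsurj : Function.Surjective φ)
    (hequiv : ∀ (t : T) (x : X), φ (t • x) = t • φ x)
    (hfeeble : ∀ U : Set X, IsOpen U → U.Nonempty → (interior (φ '' U)).Nonempty)
    (hY : Sensitive T Y) : Sensitive T X := by

  obtain ⟨V, hV, hVsens⟩ := hY
  obtain ⟨V', hV', hV'symm, hV'comp⟩ := comp_symm_mem_uniformity_sets hV
  have hUC : UniformContinuous φ := CompactSpace.uniformContinuous_of_continuous hcont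
  refine ⟨(fun p : X × X => (φ p.1, φ p.2)) ⁻¹' V', hUC hV', ?_⟩
  intro x U hU
  -- find an open neighborhood O of x inside the ball of x for U
  have hball : UniformSpace.ball x U ∈ 𝓝 x := UniformSpace.ball_mem_nhds x hU
  obtain ⟨O, hOsub, hOopen, hxO⟩ := mem_nhds_iff.mp hball
  obtain ⟨y₀, hy₀⟩ := hfeeble O hOopen ⟨x, hxO⟩
  obtain ⟨E, hE, hEsub⟩ := UniformSpace.mem_nhds_iff.mp
    (isOpen_interior.mem_nhds hy₀)
  obtain ⟨y', hy'E, t, ht⟩ := hVsens y₀ E hE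
  have hy'mem : y' ∈ φ '' O := interior_subset (hEsub hy'E)
  have hy₀mem : y₀ ∈ φ '' O := interior_subset hy₀
  obtain ⟨x₀, hx₀O, hx₀⟩ := hy₀mem
  obtain ⟨x₁, hx₁O, hx₁⟩ := hy'mem
  by_cases h0 : (φ (t • x), φ (t • x₀)) ∈ V'
  · refine ⟨x₁, hOsub hx₁O, t, ?_⟩
    intro h1
    apply ht
    apply hV'comp
    refine ⟨φ (t • x), ?_, ?_⟩
    · rw [← hx₀, ← hequiv]; exact hV'symm.symm _ _ h0
    · rw [← hx₁, ← hequiv]; exact h1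
  · exact ⟨x₀, hOsub hx₀O, t, h0⟩
end

section
/- If (X,T) is a point-transitive flow on a compact Hausdorff space with no isolated points, then (X,T) is either almost equicontinuous (the equicontinuity points are dense) or sensitive; moreover, if it is almost equicontinuous, then the set of equicontinuity points equals the set of transitive points. -/
open Filter Set Topology Uniformity

/-- `x` is an equicontinuity point of the flow `(X, T)`. -/
def EqPt (T : Type*) {X : Type*} [SMul T X] [UniformSpace X] (x : X) : Prop :=
  ∀ V ∈ 𝓤 X, ∃ U ∈ 𝓤 X, ∀ y : X, (x, y) ∈ U → ∀ t : T, (t • x, t • y) ∈ V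

/-- `x` is a transitive point: its orbit is dense. -/
def TransPt (T : Type*) {X : Type*} [SMul T X] [TopologicalSpace X] (x : X) : Prop :=
  Dense (Set.range fun t : T => t • x)

section Aux

variable {T X : Type*} [Group T] [TopologicalSpace T]
    [IsTopologicalGroup T] [UniformSpace X] [CompactSpace X] [T2Space X]
    [MulAction T X] [ContinuousSMul T X]

private lemma uc_smul (s : T) : UniformContinuous (fun z : X => s • z) :=
  CompactSpace.uniformContinuous_of_continuous (continuous_const_smul s)

private lemma orbit_mem {x : X} (hx : TransPt T x) {N : Set X} {z : X} (hN : N ∈ 𝓝 z) :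
    ∃ t : T, t • x ∈ N := by
  have h := hx z
  rw [mem_closure_iff_nhds] at h
  obtain ⟨y, hy1, t, ht⟩ := h N hN
  have ht' : t • x = y := ht
  exact ⟨t, ht' ▸ hy1⟩

private lemma trans_smul {x : X} (hx : TransPt T x) (s : T) : TransPt T (s • x) := by
  have hr : (Set.range fun t : T => t • s • x) = Set.range fun t : T => t • x := by
    ext z
    constructor
    · rintro ⟨t, rfl⟩; exact ⟨t * s, by simp [mul_smul]⟩
    · rintro ⟨t, rfl⟩; exact ⟨t * s⁻¹, by simp [smul_smul, inv_mul_cancel_right]⟩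
  rw [TransPt, hr]
  exact hx

private lemma trans_of_eq {x₀ x : X} (h0 : TransPt T x₀) (hx : EqPt T x) : TransPt T x := by
  intro z
  rw [mem_closure_iff_nhds]
  intro N hN
  rw [UniformSpace.mem_nhds_iff] at hN
  obtain ⟨V, hV, hVN⟩ := hN
  obtain ⟨W, hW, hWs, hWV⟩ := comp_symm_mem_uniformity_sets hV
  obtain ⟨U, hU, hUx⟩ := hx W hW
  obtain ⟨s, hs⟩ := orbit_mem h0 (UniformSpace.ball_mem_nhds x hU)
  obtain ⟨r, hr⟩ := orbit_mem h0 (UniformSpace.ball_mem_nhds z hW)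
  refine ⟨(r * s⁻¹) • x, hVN ?_, (r * s⁻¹), rfl⟩
  have h1 : ((r * s⁻¹) • x, (r * s⁻¹) • (s • x₀)) ∈ W := hUx _ hs _
  have h2 : (r * s⁻¹) • (s • x₀) = r • x₀ := by rw [smul_smul, inv_mul_cancel_right]
  rw [h2] at h1
  exact hWV ⟨r • x₀, hr, hWs.symm _ _ h1⟩

private lemma eq_of_trans {e x : X} (he : EqPt T e) (hx : TransPt T x) : EqPt T x := by
  intro V hV
  obtain ⟨W, hW, hWs, hWV⟩ := comp_symm_mem_uniformity_sets hV
  obtain ⟨U, hU, hUe⟩ := he W hW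
  obtain ⟨U₁, hU₁, hU₁s, hU₁U⟩ := comp_symm_mem_uniformity_sets hU
  obtain ⟨s, hs⟩ := orbit_mem hx (UniformSpace.ball_mem_nhds e hU₁)
  have huc : {p : X × X | (s • p.1, s • p.2) ∈ U₁} ∈ 𝓤 X := uc_smul s hU₁
  refine ⟨_, huc, fun y hy t => ?_⟩
  have hy' : (s • x, s • y) ∈ U₁ := hy
  have h1 : (e, s • y) ∈ U := hU₁U ⟨s • x, hs, hy'⟩
  have h2 : (e, s • x) ∈ U := hU₁U ⟨s • x, hs, refl_mem_uniformity hU₁⟩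
  have h3 : ((t * s⁻¹) • e, (t * s⁻¹) • (s • x)) ∈ W := hUe _ h2 _
  have h4 : ((t * s⁻¹) • e, (t * s⁻¹) • (s • y)) ∈ W := hUe _ h1 _
  have h5 : (t * s⁻¹) • (s • x) = t • x := by rw [smul_smul, inv_mul_cancel_right]
  have h6 : (t * s⁻¹) • (s • y) = t • y := by rw [smul_smul, inv_mul_cancel_right]
  rw [h5] at h3
  rw [h6] at h4
  exact hWV ⟨_, hWs.symm _ _ h3, h4⟩

private lemma sens_of_not_eq {x₀ : X} (h0 : TransPt T x₀) (h : ¬ EqPt T x₀) :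
    Sensitive T X := by
  rw [EqPt] at h
  push_neg at h
  obtain ⟨V, hV, hVfail⟩ := h
  obtain ⟨W, hW, hWs, hWV⟩ := comp_symm_mem_uniformity_sets hV
  refine ⟨W, hW, fun x U hU => ?_⟩
  obtain ⟨U₁, hU₁, hU₁s, hU₁U⟩ := comp_symm_mem_uniformity_sets hU
  obtain ⟨s, hs⟩ := orbit_mem h0 (UniformSpace.ball_mem_nhds x hU₁)
  have huc : {p : X × X | (s • p.1, s • p.2) ∈ U₁} ∈ 𝓤 X := uc_smul s hU₁
  obtain ⟨z, hz, t, hzt⟩ := hVfail _ huc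
  have hz' : (s • x₀, s • z) ∈ U₁ := hz
  have e1 : (t * s⁻¹) • (s • x₀) = t • x₀ := by rw [smul_smul, inv_mul_cancel_right]
  have e2 : (t * s⁻¹) • (s • z) = t • z := by rw [smul_smul, inv_mul_cancel_right]
  by_cases hc : ((t * s⁻¹) • x, (t * s⁻¹) • (s • x₀)) ∈ W
  · refine ⟨s • z, hU₁U ⟨s • x₀, hs, hz'⟩, t * s⁻¹, fun hcon => ?_⟩
    rw [e1] at hc
    rw [e2] at hcon
    exact hzt (hWV ⟨_, hWs.symm _ _ hc, hcon⟩)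
  · exact ⟨s • x₀, hU₁U ⟨s • x₀, hs, refl_mem_uniformity hU₁⟩, t * s⁻¹, hc⟩

end Aux

/-- A point-transitive flow on a compact Hausdorff space with no isolated points is
either almost equicontinuous (the equicontinuity points are dense) or sensitive;
moreover, if it is almost equicontinuous then the equicontinuity points are
exactly the transitive points. -/
theorem almostEquicont_or_sensitive {T X : Type*} [Group T] [TopologicalSpace T]
    [IsTopologicalGroup T] [UniformSpace X] [CompactSpace X] [T2Space X]
    [MulAction T X] [ContinuousSMul T X]
    (htrans : ∃ x₀ : X, TransPt T x₀)
    (hnoiso : ∀ x : X, Filter.NeBot (nhdsWithin x {x}ᶜ)) :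
    (Dense {x : X | EqPt T x} ∨ Sensitive T X) ∧
      (Dense {x : X | EqPt T x} → {x : X | EqPt T x} = {x : X | TransPt T x}) := by
  obtain ⟨x₀, hx₀⟩ := htrans
  constructor
  · by_cases h : EqPt T x₀
    · left
      have hsub : (Set.range fun t : T => t • x₀) ⊆ {x : X | EqPt T x} := by
        rintro _ ⟨t, rfl⟩
        exact eq_of_trans h (trans_smul hx₀ t)
      exact hx₀.mono hsub
    · exact Or.inr (sens_of_not_eq hx₀ h)
  · intro hd
    have : Nonempty X := ⟨x₀⟩
    obtain ⟨e, he⟩ := hd.nonempty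
    ext x
    simp only [Set.mem_setOf_eq]
    exact ⟨fun hx => trans_of_eq hx₀ hx, fun hx => eq_of_trans he hx⟩
end

section
/- If a flow (X,T) is uniformly rigid, then the induced flow (E(X),T) is uniformly rigid; conversely, if (X,T) is point-transitive and (E(X),T) is uniformly rigid, then (X,T) is uniformly rigid. -/
open Filter Set Topology Uniformity UniformConvergence

/-- A flow is uniformly rigid: for every entourage `V` some nontrivial group
element moves every point of `X` within `V` of itself. -/
def UniformlyRigid (T X : Type*) [Monoid T] [SMul T X] [UniformSpace X] : Prop :=
  ∀ V ∈ 𝓤 X, ∃ t : T, t ≠ 1 ∧ ∀ x : X, (x, t • x) ∈ V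

/-- Uniform rigidity of the subflow on a subset `A` (with the relative uniformity). -/
def UniformlyRigidOn (T : Type*) {X : Type*} [Monoid T] [SMul T X] [UniformSpace X]
    (A : Set X) : Prop :=
  ∀ V ∈ 𝓤 X, ∃ t : T, t ≠ 1 ∧ ∀ x ∈ A, (x, t • x) ∈ V

/-- If a flow `(X, T)` is uniformly rigid then the induced flow `(E(X), T)` is
uniformly rigid; conversely, if `(X, T)` is point-transitive and `(E(X), T)` is
uniformly rigid, then `(X, T)` is uniformly rigid. -/
theorem uniformlyRigid_env {T X : Type*} [Group T] [TopologicalSpace T]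
    [IsTopologicalGroup T] [UniformSpace X] [CompactSpace X] [T2Space X]
    [MulAction T X] [ContinuousSMul T X] :
    (UniformlyRigid T X → UniformlyRigidOn T (envSemigroup T X)) ∧
      ((∃ x₀ : X, Dense (Set.range fun t : T => t • x₀)) →
        UniformlyRigidOn T (envSemigroup T X) → UniformlyRigid T X) := by
  constructor
  · -- forward direction
    intro h V hV
    -- pull V back along the (uniformly continuous) identity from uniform convergence
    have hVu : Prod.map (UniformFun.toFun : (X →ᵤ X) → X → X)
        (UniformFun.toFun : (X →ᵤ X) → X → X) ⁻¹' V ∈ 𝓤 (X →ᵤ X) :=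
      UniformFun.uniformContinuous_toFun hV
    obtain ⟨U, hU, hUV⟩ := (UniformFun.hasBasis_uniformity X X).mem_iff.mp hVu
    obtain ⟨t, ht, htU⟩ := h U hU
    refine ⟨t, ht, fun f _ => ?_⟩
    have : (UniformFun.ofFun f, UniformFun.ofFun (t • f)) ∈ UniformFun.gen X X U := by
      intro x
      have : (f x, t • f x) ∈ U := htU (f x)
      simpa using this
    exact hUV this
  · -- converse direction
    rintro ⟨x₀, hx₀⟩ h V hV
    -- the entourage of pointwise evaluation at x₀
    have hS : (fun p : (X → X) × (X → X) => (p.1 x₀, p.2 x₀)) ⁻¹' V ∈ 𝓤 (X → X) := by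
      have : UniformContinuous (fun f : X → X => f x₀) := uniformContinuous_pi.mp uniformContinuous_id x₀
      exact this hV
    obtain ⟨t, ht, htS⟩ := h _ hS
    refine ⟨t, ht, fun x => ?_⟩
    -- evaluation at x₀ maps the (compact) enveloping semigroup onto X
    have hcomp : IsCompact (envSemigroup T X) := isClosed_closure.isCompact
    have himg : IsCompact ((fun f : X → X => f x₀) '' envSemigroup T X) :=
      hcomp.image (continuous_apply x₀)
    have hsub : (Set.range fun t : T => t • x₀) ⊆
        (fun f : X → X => f x₀) '' envSemigroup T X := by
      rintro _ ⟨s, rfl⟩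
      exact ⟨fun x => s • x, subset_closure ⟨s, rfl⟩, rfl⟩
    have hdense : Dense ((fun f : X → X => f x₀) '' envSemigroup T X) := hx₀.mono hsub
    have huniv : (fun f : X → X => f x₀) '' envSemigroup T X = Set.univ := by
      rw [← himg.isClosed.closure_eq, hdense.closure_eq]
    obtain ⟨f, hf, hfx⟩ : ∃ f ∈ envSemigroup T X, f x₀ = x := by
      have : x ∈ (fun f : X → X => f x₀) '' envSemigroup T X := huniv ▸ Set.mem_univ x
      obtain ⟨f, hf, hfx⟩ := this
      exact ⟨f, hf, hfx⟩
    have := htS f hf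
    simpa [hfx] using this
end

section
/- For a flow (X,T), a pair (x,y) is syndetically proximal if and only if for every entourage V, the set {t ∈ T : (tx,ty) ∈ V} is thickly syndetic. -/
open Filter Set Topology Uniformity

/-- A subset `S` of a topological group `T` is syndetic: `K · S = T` for some
compact `K ⊆ T`. -/
def SyndeticSet {T : Type*} [Mul T] [TopologicalSpace T] (S : Set T) : Prop :=
  ∃ K : Set T, IsCompact K ∧ ∀ t : T, ∃ k ∈ K, ∃ s ∈ S, t = k * s

/-- A subset `S ⊆ T` is thickly syndetic: for every compact `K ⊆ T` there is a
syndetic set `S_K` with `K · S_K ⊆ S`. -/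
def ThicklySyndeticSet {T : Type*} [Mul T] [TopologicalSpace T] (S : Set T) : Prop :=
  ∀ K : Set T, IsCompact K → ∃ S' : Set T, SyndeticSet S' ∧ ∀ k ∈ K, ∀ s ∈ S', k * s ∈ S

/-- `(x, y)` is a syndetically proximal pair. -/
def SyndProxPair (T : Type*) {X : Type*} [Mul T] [TopologicalSpace T] [SMul T X]
    [UniformSpace X] (x y : X) : Prop :=
  ∀ U ∈ 𝓤 X, SyndeticSet {t : T | (t • x, t • y) ∈ U}

/-- For a flow `(X, T)`, a pair `(x, y)` is syndetically proximal if and only if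
for every entourage `V` the set of return times `{t : (tx, ty) ∈ V}` is thickly
syndetic. -/
theorem syndProx_iff_thicklySyndetic {T X : Type*} [Group T] [TopologicalSpace T]
    [IsTopologicalGroup T] [UniformSpace X] [CompactSpace X] [T2Space X]
    [MulAction T X] [ContinuousSMul T X] (x y : X) :
    SyndProxPair T x y ↔
      ∀ V ∈ 𝓤 X, ThicklySyndeticSet {t : T | (t • x, t • y) ∈ V} := by
  constructor
  · intro h V hV K hK
    -- pick an open entourage W ⊆ V
    obtain ⟨W, ⟨hWmem, hWopen⟩, hWV⟩ := uniformity_hasBasis_open.mem_iff.mp hV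
    -- the joint action map
    have hcont : Continuous fun p : T × (X × X) => ((p.1 • p.2.1, p.1 • p.2.2) : X × X) := by
      exact ((continuous_fst.smul (continuous_fst.comp continuous_snd)).prodMk
        (continuous_fst.smul (continuous_snd.comp continuous_snd)))
    have hO : IsOpen ((fun p : T × (X × X) => ((p.1 • p.2.1, p.1 • p.2.2) : X × X)) ⁻¹' W) :=
      hWopen.preimage hcont
    have hΔcompact : IsCompact (diagonal X) := by
      have : diagonal X = range (fun a : X => (a, a)) := by
        ext ⟨a, b⟩
        simp [Set.diagonal, eq_comm, Prod.ext_iff]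
      rw [this]
      exact isCompact_range (continuous_id.prodMk continuous_id)
    have hsub : K ×ˢ (diagonal X) ⊆
        (fun p : T × (X × X) => ((p.1 • p.2.1, p.1 • p.2.2) : X × X)) ⁻¹' W := by
      rintro ⟨k, a, b⟩ ⟨hk, hab⟩
      simp only [mem_preimage]
      have hab' : a = b := hab
      subst hab'
      exact refl_mem_uniformity hWmem
    obtain ⟨u, v, hu, hv, hKu, hΔv, huv⟩ := generalized_tube_lemma hK hΔcompact hO hsub
    have hvU : v ∈ 𝓤 X := by
      rw [← nhdsSet_diagonal_eq_uniformity]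
      exact hv.mem_nhdsSet.mpr hΔv
    refine ⟨{t : T | (t • x, t • y) ∈ v}, h v hvU, ?_⟩
    intro k hk s hs
    have : ((k, (s • x, s • y)) : T × (X × X)) ∈ u ×ˢ v := ⟨hKu hk, hs⟩
    have := huv this
    simp only [mem_preimage] at this
    have h2 : ((k * s) • x, (k * s) • y) ∈ W := by
      rwa [mul_smul, mul_smul]
    exact hWV h2
  · intro h V hV
    obtain ⟨S', hS', hsub⟩ := h V hV {1} isCompact_singleton
    obtain ⟨K, hK, hKS⟩ := hS'
    refine ⟨K, hK, fun t => ?_⟩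
    obtain ⟨k, hk, s, hs, hts⟩ := hKS t
    exact ⟨k, hk, s, by simpa using hsub 1 rfl s hs, hts⟩
end

section
/- If a flow (X,T) is syndetically distal, then the induced flow (E(X),T) on its enveloping semigroup is syndetically distal. -/
open Filter Set Topology Uniformity

/-- If a flow `(X, T)` is syndetically distal (no distinct pair is syndetically
proximal), then the induced flow `(E(X), T)` on its enveloping semigroup
(pointwise uniformity, `T` acting by left composition) is syndetically distal. -/
theorem env_syndeticallyDistal {T X : Type*} [Group T] [TopologicalSpace T]
    [IsTopologicalGroup T] [UniformSpace X] [CompactSpace X] [T2Space X]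
    [MulAction T X] [ContinuousSMul T X]
    (h : ∀ x y : X, SyndProxPair T x y → x = y) :
    ∀ p ∈ envSemigroup T X, ∀ q ∈ envSemigroup T X, SyndProxPair T p q → p = q := by
  intro p _ q _ hpq
  funext x
  apply h
  intro U hU
  have hV : (Prod.map (fun f : X → X => f x) (fun f : X → X => f x)) ⁻¹' U ∈ 𝓤 (X → X) :=
    (Pi.uniformContinuous_proj (fun _ : X => X) x) hU
  exact hpq _ hV
end

section
/- If (X,T) is a metrizable compact flow that is distal and hereditarily almost equicontinuous, then the induced flow (E(X),T) on its enveloping semigroup is equicontinuous. -/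
open Filter Set Topology Uniformity

/-- `(x, y)` is a proximal pair for the `T`-action. -/
def ProxPair (T : Type*) {X : Type*} [SMul T X] [UniformSpace X] (x y : X) : Prop :=
  ∀ U ∈ 𝓤 X, ∃ t : T, (t • x, t • y) ∈ U

section Aux

variable {T X : Type*} [Group T] [TopologicalSpace T] [TopologicalSpace X] [MulAction T X] [ContinuousSMul T X]

lemma env_smul_mem (t : T) : (fun x : X => t • x) ∈ envSemigroup T X :=
  subset_closure ⟨t, rfl⟩

lemma env_comp_smul (t : T) {p : X → X} (hp : p ∈ envSemigroup T X) :
    (fun x => t • p x) ∈ envSemigroup T X := by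
  have hc : Continuous fun f : X → X => fun x => t • f x :=
    continuous_pi fun x => (continuous_const_smul t).comp (continuous_apply x)
  have hmt : MapsTo (fun f : X → X => fun x => t • f x)
      (Set.range fun s : T => fun x : X => s • x) (envSemigroup T X) := by
    rintro _ ⟨s, rfl⟩
    exact subset_closure ⟨t * s, by funext x; simp [mul_smul]⟩
  have := (hmt.closure hc) hp
  rwa [show closure (envSemigroup T X) = envSemigroup T X from
    IsClosed.closure_eq isClosed_closure] at this

lemma env_comp {p q : X → X} (hp : p ∈ envSemigroup T X) (hq : q ∈ envSemigroup T X) :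
    (fun x => p (q x)) ∈ envSemigroup T X := by
  have hc : Continuous fun f : X → X => fun x => f (q x) :=
    continuous_pi fun x => continuous_apply (q x)
  have hmt : MapsTo (fun f : X → X => fun x => f (q x))
      (Set.range fun s : T => fun x : X => s • x) (envSemigroup T X) := by
    rintro _ ⟨s, rfl⟩
    exact env_comp_smul s hq
  have := (hmt.closure hc) hp
  rwa [show closure (envSemigroup T X) = envSemigroup T X from
    IsClosed.closure_eq isClosed_closure] at this

lemma env_eval_mem {p : X → X} (hp : p ∈ envSemigroup T X) (x : X) :
    p x ∈ closure (Set.range fun t : T => t • x) := by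
  have hmt : MapsTo (fun f : X → X => f x)
      (Set.range fun s : T => fun y : X => s • y)
      (closure (Set.range fun t : T => t • x)) := by
    rintro _ ⟨s, rfl⟩
    exact subset_closure ⟨s, rfl⟩
  have := (hmt.closure (continuous_apply x)) hp
  rwa [show closure (closure (Set.range fun t : T => t • x)) = closure (Set.range fun t : T => t • x) from
    closure_closure] at this

lemma orbitClosure_invariant (x : X) (t : T) {z : X}
    (hz : z ∈ closure (Set.range fun s : T => s • x)) :
    t • z ∈ closure (Set.range fun s : T => s • x) := by
  have hmt : MapsTo (fun y : X => t • y) (Set.range fun s : T => s • x)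
      (closure (Set.range fun s : T => s • x)) := by
    rintro _ ⟨s, rfl⟩
    exact subset_closure ⟨t * s, by simp [mul_smul]⟩
  have := (hmt.closure (continuous_const_smul t)) hz
  rwa [show closure (closure (Set.range fun s : T => s • x)) = closure (Set.range fun s : T => s • x) from
    closure_closure] at this

end Aux

section Compact

variable {T X : Type*} [Group T] [TopologicalSpace T] [TopologicalSpace X] [T2Space X] [CompactSpace X]
  [MulAction T X] [ContinuousSMul T X]

lemma env_isCompact : IsCompact (envSemigroup T X) :=
  isClosed_closure.isCompact

lemma exists_env_eval_eq {x z : X} (hz : z ∈ closure (Set.range fun t : T => t • x)) :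
    ∃ p ∈ envSemigroup T X, p x = z := by
  have himg : IsCompact ((fun f : X → X => f x) '' envSemigroup T X) :=
    env_isCompact.image (continuous_apply x)
  have hclosed : IsClosed ((fun f : X → X => f x) '' envSemigroup T X) := himg.isClosed
  have hsub : closure (Set.range fun t : T => t • x) ⊆
      (fun f : X → X => f x) '' envSemigroup T X := by
    apply closure_minimal _ hclosed
    rintro _ ⟨t, rfl⟩
    exact ⟨fun y => t • y, env_smul_mem t, rfl⟩
  obtain ⟨p, hp, hpx⟩ := hsub hz
  exact ⟨p, hp, hpx⟩

noncomputable local instance : Semigroup (X → X) where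
  mul f g := fun x => f (g x)
  mul_assoc f g h := rfl

lemma exists_idem_env {p : X → X} (hp : p ∈ envSemigroup T X) :
    ∃ u ∈ envSemigroup T X, (∃ q ∈ envSemigroup T X, u = fun x => q (p x)) ∧
      (fun x => u (u x)) = u := by
  classical
  set S : Set (X → X) := (fun q : X → X => fun x => q (p x)) '' envSemigroup T X with hS
  have hScpt : IsCompact S :=
    env_isCompact.image (continuous_pi fun x => continuous_apply (p x))
  have hSne : S.Nonempty := ⟨_, ⟨_, env_smul_mem (1 : T), rfl⟩⟩
  have hSmul : ∀ f ∈ S, ∀ g ∈ S, f * g ∈ S := by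
    rintro _ ⟨q, hq, rfl⟩ _ ⟨q', hq', rfl⟩
    exact ⟨fun y => q (p (q' y)), env_comp hq (env_comp hp hq'), rfl⟩
  have hcml : ∀ r : X → X, Continuous (· * r) := fun r =>
    continuous_pi fun x => continuous_apply (r x)
  obtain ⟨u, huS, hidem⟩ :=
    exists_idempotent_in_compact_subsemigroup hcml S hSne hScpt hSmul
  obtain ⟨q, hq, hqu⟩ := huS
  refine ⟨u, ?_, ⟨q, hq, hqu.symm⟩, ?_⟩
  · rw [← hqu]; exact env_comp hq hp
  · exact hidem

end Compact

section Main

variable {T X : Type*} [Group T] [TopologicalSpace T] [UniformSpace X] [CompactSpace X]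
  [T2Space X] [MulAction T X] [ContinuousSMul T X]

lemma env_idem_eq_id (hdistal : ∀ x y : X, ProxPair T x y → x = y)
    {u : X → X} (hu : u ∈ envSemigroup T X) (hidem : (fun x => u (u x)) = u) :
    ∀ x, u x = x := by
  intro x
  refine (hdistal x (u x) ?_).symm
  intro V hV
  obtain ⟨W, hW, hWsymm, hWW⟩ := comp_symm_mem_uniformity_sets hV
  have huux : u (u x) = u x := congrFun hidem x
  have hN : {f : X → X | f x ∈ UniformSpace.ball (u x) W ∧
      f (u x) ∈ UniformSpace.ball (u x) W} ∈ 𝓝 u := by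
    have h1 : (fun f : X → X => f x) ⁻¹' UniformSpace.ball (u x) W ∈ 𝓝 u :=
      (continuous_apply x).continuousAt.preimage_mem_nhds
        (UniformSpace.ball_mem_nhds _ hW)
    have h2 : (fun f : X → X => f (u x)) ⁻¹' UniformSpace.ball (u x) W ∈ 𝓝 u := by
      have : u (u x) ∈ UniformSpace.ball (u x) W → True := fun _ => trivial
      have := (continuous_apply (u x)).continuousAt.preimage_mem_nhds
        (x := u) (by rw [huux]; exact UniformSpace.ball_mem_nhds _ hW)
      exact this
    exact Filter.inter_mem h1 h2
  obtain ⟨f, hf, t, hft⟩ := mem_closure_iff_nhds.mp hu _ hN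
  subst hft
  refine ⟨t, hWW ?_⟩
  rcases hf with ⟨hf1, hf2⟩
  exact ⟨u x, hWsymm.symm _ _ hf1, hf2⟩

/-- Distality implies every orbit closure is minimal. -/
lemma orbit_closure_minimal (hdistal : ∀ x y : X, ProxPair T x y → x = y)
    {x z : X} (hz : z ∈ closure (Set.range fun t : T => t • x)) :
    x ∈ closure (Set.range fun t : T => t • z) := by
  obtain ⟨p, hp, hpx⟩ := exists_env_eval_eq (T := T) hz
  obtain ⟨u, hu, ⟨q, hq, hqu⟩, hidem⟩ := exists_idem_env (T := T) hp
  have hid := env_idem_eq_id hdistal hu hidem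
  have hx : x = q z := by
    have := hid x
    rw [hqu] at this
    simpa [hpx] using this.symm
  rw [hx]
  exact env_eval_mem hq z

lemma orbitClosure_subset (hdistal : ∀ x y : X, ProxPair T x y → x = y)
    {x z : X} (hz : z ∈ closure (Set.range fun t : T => t • x)) :
    closure (Set.range fun t : T => t • x) ⊆ closure (Set.range fun t : T => t • z) := by
  have hx : x ∈ closure (Set.range fun t : T => t • z) := orbit_closure_minimal hdistal hz
  apply closure_minimal _ isClosed_closure
  rintro _ ⟨t, rfl⟩
  exact orbitClosure_invariant z t hx

/-- The subflow on any orbit closure is uniformly equicontinuous. -/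
lemma orbit_closure_unif_equicont (hdistal : ∀ x y : X, ProxPair T x y → x = y)
    (hhae : ∀ A : Set X, IsClosed A → (∀ t : T, ∀ x ∈ A, t • x ∈ A) →
      A ⊆ closure {x | x ∈ A ∧ ∀ V ∈ 𝓤 X, ∃ U ∈ 𝓤 X,
        ∀ y ∈ A, (x, y) ∈ U → ∀ t : T, (t • x, t • y) ∈ V}) (x : X) :
    ∀ V ∈ 𝓤 X, ∃ U ∈ 𝓤 X, ∀ p ∈ closure (Set.range fun t : T => t • x),
      ∀ q ∈ closure (Set.range fun t : T => t • x), (p, q) ∈ U →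
        ∀ t : T, (t • p, t • q) ∈ V := by
  classical
  set A : Set X := closure (Set.range fun t : T => t • x) with hA
  have hAclosed : IsClosed A := isClosed_closure
  have hAinv : ∀ t : T, ∀ y ∈ A, t • y ∈ A := fun t y hy => orbitClosure_invariant x t hy
  have hAx : x ∈ A := subset_closure ⟨1, one_smul T x⟩
  -- an equicontinuity point of the subflow A
  obtain ⟨a, haA, haeq⟩ : ∃ a, a ∈ A ∧ ∀ V ∈ 𝓤 X, ∃ U ∈ 𝓤 X,
      ∀ y ∈ A, (a, y) ∈ U → ∀ t : T, (t • a, t • y) ∈ V := by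
    have := hhae A hAclosed hAinv hAx
    rcases (closure_nonempty_iff.mp ⟨x, this⟩) with ⟨a, haA, haeq⟩
    exact ⟨a, haA, haeq⟩
  -- Step 2a: every point of A is an equicontinuity point of the subflow A
  have h2a : ∀ z ∈ A, ∀ V ∈ 𝓤 X, ∃ U ∈ 𝓤 X, ∀ y ∈ A, (z, y) ∈ U →
      ∀ t : T, (t • z, t • y) ∈ V := by
    intro z hz V hV
    obtain ⟨W, hW, hWsymm, hWW⟩ := comp_symm_mem_uniformity_sets hV
    obtain ⟨U₀, hU₀, hU₀W⟩ := haeq W hW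
    obtain ⟨U₁, ⟨hU₁, hU₁open⟩, hU₁sub⟩ := uniformity_hasBasis_open.mem_iff.mp hU₀
    -- a lies in the orbit closure of z
    have haz : a ∈ closure (Set.range fun t : T => t • z) :=
      orbitClosure_subset hdistal hz haA
    -- find s with s • z in the ball of a
    have hball : UniformSpace.ball a U₁ ∈ 𝓝 a := UniformSpace.ball_mem_nhds _ hU₁
    obtain ⟨w, hw, s, hsw⟩ := mem_closure_iff_nhds.mp haz _ hball
    -- continuity of s-action at z
    have hcont : (fun y : X => s • y) ⁻¹' UniformSpace.ball a U₁ ∈ 𝓝 z := by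
      apply (continuous_const_smul s).continuousAt.preimage_mem_nhds
      rw [show s • z = w from hsw]
      exact (UniformSpace.isOpen_ball a hU₁open).mem_nhds hw
    obtain ⟨U, hU, hUsub⟩ := UniformSpace.mem_nhds_iff.mp hcont
    refine ⟨U, hU, ?_⟩
    intro y hy hzy t
    have hsz : (a, s • z) ∈ U₀ := hU₁sub (by rw [show s • z = w from hsw]; exact hw)
    have hsy : (a, s • y) ∈ U₀ := hU₁sub (hUsub hzy)
    have hsyA : s • y ∈ A := hAinv s y hy
    have hszA : s • z ∈ A := hAinv s z hz
    have h1 := hU₀W _ hszA hsz (t * s⁻¹)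
    have h2 := hU₀W _ hsyA hsy (t * s⁻¹)
    have e1 : (t * s⁻¹) • (s • z) = t • z := by
      rw [smul_smul, mul_assoc, inv_mul_cancel, mul_one]
    have e2 : (t * s⁻¹) • (s • y) = t • y := by
      rw [smul_smul, mul_assoc, inv_mul_cancel, mul_one]
    rw [e1] at h1
    rw [e2] at h2
    exact hWW ⟨(t * s⁻¹) • a, hWsymm.symm _ _ h1, h2⟩
  -- Step 2b: uniformize over A by compactness
  intro V hV
  obtain ⟨W, hW, hWsymm, hWW⟩ := comp_symm_mem_uniformity_sets hV
  have key : ∀ z : X, ∃ U' : Set (X × X), U' ∈ 𝓤 X ∧ SetRel.IsSymm U' ∧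
      (z ∈ A → ∀ y ∈ A, (z, y) ∈ SetRel.comp U' U' → ∀ t : T, (t • z, t • y) ∈ W) := by
    intro z
    by_cases hz : z ∈ A
    · obtain ⟨U, hU, hUW⟩ := h2a z hz W hW
      obtain ⟨U', hU', hU'symm, hU'U⟩ := comp_symm_mem_uniformity_sets hU
      exact ⟨U', hU', hU'symm, fun _ y hy hzy t => hUW y hy (hU'U hzy) t⟩
    · exact ⟨Set.univ, Filter.univ_mem, ⟨fun _ _ _ => trivial⟩, fun h => absurd h hz⟩
  choose U' hU'mem hU'symm hU'prop using key
  have hAcpt : IsCompact A := hAclosed.isCompact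
  obtain ⟨F, hFA, hFcov⟩ := hAcpt.elim_nhds_subcover (fun z => UniformSpace.ball z (U' z))
    (fun z _ => UniformSpace.ball_mem_nhds z (hU'mem z))
  refine ⟨⋂ z ∈ F, U' z, (Filter.biInter_finset_mem F).mpr fun z _ => hU'mem z, ?_⟩
  intro p hp q hq hpq t
  obtain ⟨i, hiF, hpi⟩ := Set.mem_iUnion₂.mp (hFcov hp)
  have hip : (i, p) ∈ U' i := hpi
  have hpqi : (p, q) ∈ U' i := by
    have := Set.mem_iInter₂.mp hpq i hiF
    exact this
  have hiq : (i, q) ∈ SetRel.comp (U' i) (U' i) := ⟨p, hip, hpqi⟩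
  have hipc : (i, p) ∈ SetRel.comp (U' i) (U' i) := ⟨p, hip, refl_mem_uniformity (hU'mem i)⟩
  have hiA : i ∈ A := hFA i hiF
  have h1 := hU'prop i hiA p hp hipc t
  have h2 := hU'prop i hiA q hq hiq t
  exact hWW ⟨t • i, hWsymm.symm _ _ h1, h2⟩

end Main

/-- If `(X, T)` is a compact metrizable flow which is distal and hereditarily
almost equicontinuous (every closed invariant subset has a dense set of
equicontinuity points of the subflow), then the induced flow `(E(X), T)` on the
enveloping semigroup is equicontinuous. -/
theorem env_equicont_of_distal_hae {T X : Type*} [Group T] [TopologicalSpace T]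
    [IsTopologicalGroup T] [UniformSpace X] [CompactSpace X] [T2Space X]
    [TopologicalSpace.MetrizableSpace X] [MulAction T X] [ContinuousSMul T X]
    (hdistal : ∀ x y : X, ProxPair T x y → x = y)
    (hhae : ∀ A : Set X, IsClosed A → (∀ t : T, ∀ x ∈ A, t • x ∈ A) →
      A ⊆ closure {x | x ∈ A ∧ ∀ V ∈ 𝓤 X, ∃ U ∈ 𝓤 X,
        ∀ y ∈ A, (x, y) ∈ U → ∀ t : T, (t • x, t • y) ∈ V}) :
    EquicontOn T (envSemigroup T X) := by
  intro V hV
  rw [Pi.uniformity] at hV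
  obtain ⟨I, hIfin, Vx, hVx, hVuniv, hVeq, -⟩ := Filter.mem_iInf'.mp hV
  choose W hWmem hWsub using fun i => Filter.mem_comap.mp (hVx i)
  have hM := fun i : X => orbit_closure_unif_equicont hdistal hhae i (W i) (hWmem i)
  choose W' hW'mem hW'prop using hM
  refine ⟨⋂ i ∈ I, (fun a : (X → X) × (X → X) => (a.1 i, a.2 i)) ⁻¹' (W' i), ?_, ?_⟩
  · rw [Pi.uniformity]
    apply (Filter.biInter_mem hIfin).mpr
    intro i _
    exact Filter.mem_iInf_of_mem i (Filter.preimage_mem_comap (hW'mem i))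
  · intro f hf g hg hfg t
    rw [hVeq]
    apply Set.mem_iInter₂.mpr
    intro i hi
    apply hWsub i
    have hfi : f i ∈ closure (Set.range fun s : T => s • i) := env_eval_mem hf i
    have hgi : g i ∈ closure (Set.range fun s : T => s • i) := env_eval_mem hg i
    have hfgW' : (f i, g i) ∈ W' i := Set.mem_iInter₂.mp hfg i hi
    have := hW'prop i (f i) hfi (g i) hgi hfgW' t
    simpa [Pi.smul_apply] using this
end
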